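/- Let σ be the substitution a ↦ abab, b ↦ b on the alphabet {a, b}, let z be its unique infinite fixed point beginning with a (equivalently z = lim_k p_k, where p₁ = a and p_{k+1} = p_k bᵏ p_k), and let Z = O(z). Then the winning shift W(Z) has infinite coding dimension, i.e., the sums Σα for α ∈ W(Z) are unbounded. -/

import Mathlib

open scoped BigOperators

/-- A language is regular if it is accepted by a DFA with finitely many states. -/
def IsRegularLang {α : Type*} (L : Set (List α)) : Prop :=
  ∃ (σ : Type) (_ : Fintype σ) (M : DFA α σ), ∀ w : List α, w ∈ M.accepts ↔ w ∈ L

/-- Pad a word over `A` to length `M` by prepending the padding symbol `none`. -/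
def padOne {A : Type*} (M : ℕ) (w : List A) : List (Option A) :=
  List.replicate (M - w.length) none ++ w.map some

/-- The padded form of a `d`-tuple of words over `A`, as a word over `(A ∪ {#})^d`. -/
def padTuple {A : Type*} {d : ℕ} (ws : Fin d → List A) : List (Fin d → Option A) :=
  List.ofFn fun j : Fin (Finset.univ.sup fun i : Fin d => (ws i).length) =>
    fun i : Fin d =>
      (padOne (Finset.univ.sup fun i : Fin d => (ws i).length) (ws i)).getD j.val none

/-- An abstract numeration system over the alphabet `A`, encoded by the order isomorphism
`rep : ℕ → L ⊆ A*` enumerating its (infinite) language in increasing order. -/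
structure ANS (A : Type*) where
  rep : ℕ → List A
  inj : Function.Injective rep

/-- A set `Y ⊆ ℕ^d` is `S`-recognizable if the padded representations of its members form
a regular language. -/
def ANS.Recognizable {A : Type*} (S : ANS A) {d : ℕ} (Y : Set (Fin d → ℕ)) : Prop :=
  IsRegularLang { w : List (Fin d → Option A) | ∃ t ∈ Y, w = padTuple fun i => S.rep (t i) }

/-- An ANS is addable if the graph of addition is `S`-recognizable. -/
def ANS.Addable {A : Type*} (S : ANS A) : Prop :=
  S.Recognizable { t : Fin 3 → ℕ | t 0 + t 1 = t 2 }

/-- An ANS is comparable if the relation `≤` is `S`-recognizable. -/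
def ANS.Comparable {A : Type*} (S : ANS A) : Prop :=
  S.Recognizable { t : Fin 2 → ℕ | t 0 ≤ t 1 }

/-- An ANS is regular if `ℕ` (i.e. its language) is `S`-recognizable. -/
def ANS.IsRegularANS {A : Type*} (S : ANS A) : Prop :=
  S.Recognizable (Set.univ : Set (Fin 1 → ℕ))

/-- The unary ANS, with language `0*` ordered by length. -/
def unaryANS : ANS Unit where
  rep := fun n => List.replicate n ()
  inj := fun m n h => by simpa using congrArg List.length h

/-- `x` is `S`-automatic: some DFAO outputs `x n` on input `rep_S n`. -/
def SAutomatic {A C : Type*} (S : ANS A) (x : ℕ → C) : Prop :=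
  ∃ (Q : Type) (_ : Fintype Q) (M : DFA A Q) (τ : Q → C),
    ∀ n : ℕ, τ (M.eval (S.rep n)) = x n

/-- The shift map on one-sided infinite words. -/
def shiftMap {C : Type*} (x : ℕ → C) : ℕ → C := fun n => x (n + 1)

/-- The orbit closure of `x` (closure in the product topology over the discrete alphabet):
`y` belongs to it iff every finite prefix of `y` occurs in `x`. -/
def orbitClosure {C : Type*} (x : ℕ → C) : Set (ℕ → C) :=
  { y | ∀ n : ℕ, ∃ m : ℕ, ∀ i < n, y i = x (m + i) }

/-- A subshift: a shift-invariant subset of `C^ℕ` that is closed in the product topology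
over the discrete alphabet (expressed combinatorially). -/
def IsSubshift {C : Type*} (X : Set (ℕ → C)) : Prop :=
  (∀ x ∈ X, shiftMap x ∈ X) ∧
  ∀ y : ℕ → C, (∀ n : ℕ, ∃ x ∈ X, ∀ i < n, y i = x i) → y ∈ X

/-- The language of a set of infinite words: all finite factors of its elements. -/
def LangOf {C : Type*} (X : Set (ℕ → C)) : Set (List C) :=
  { w | ∃ x ∈ X, ∃ p : ℕ, w = List.ofFn fun i : Fin w.length => x (p + i) }

/-- A word is right special in (the language of) `X` if it has two distinct one-letter
extensions in the language of `X`. -/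
def RightSpecial {C : Type*} (X : Set (ℕ → C)) (w : List C) : Prop :=
  ∃ a b : C, a ≠ b ∧ w ++ [a] ∈ LangOf X ∧ w ++ [b] ∈ LangOf X

/-- The factor complexity of `x`: the number of distinct factors of length `n`. -/
noncomputable def factorComplexity {C : Type*} (x : ℕ → C) (n : ℕ) : ℕ :=
  Set.ncard { w : List C | ∃ p : ℕ, w = List.ofFn fun i : Fin n => x (p + i) }

/-- `T` is a strategy tree witnessing `α ∈ W(X)`: a prefix-closed set of finite words
containing the empty word, in which every word of length `i` has exactly `α i + 1`
one-letter extensions, and all whose infinite branches lie in `X`. -/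
def IsStrategyTree {C : Type*} (X : Set (ℕ → C)) (α : ℕ → ℕ) (T : Set (List C)) : Prop :=
  ([] : List C) ∈ T ∧
  (∀ u v : List C, u ++ v ∈ T → u ∈ T) ∧
  (∀ w ∈ T, Set.ncard { c : C | w ++ [c] ∈ T } = α w.length + 1) ∧
  (∀ y : ℕ → C, (∀ n : ℕ, (List.ofFn fun i : Fin n => y i) ∈ T) → y ∈ X)

/-- The winning shift of `X ⊆ C^ℕ`, a subset of `ℕ^ℕ`. -/
def winningShift {C : Type*} (X : Set (ℕ → C)) : Set (ℕ → ℕ) :=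
  { α | ∃ T : Set (List C), IsStrategyTree X α T }

/-- Membership in the winning set of a set `X` of finite words, defined recursively:
`ε ∈ W(X)` iff `ε ∈ X`, and `a :: α ∈ W(X)` iff there is a set of `a + 1` letters `c`
such that `α` is in the winning set of the left quotient of `X` by `c`. -/
def winningSetMem {C : Type*} : List ℕ → Set (List C) → Prop
  | [], X => [] ∈ X
  | a :: α, X => ∃ S : Finset C, S.card = a + 1 ∧ ∀ c ∈ S, winningSetMem α { w | c :: w ∈ X }

/-- `Σ y = m`: the sum of the letters of `y ∈ ℕ^ℕ` is finite and equals `m`. -/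
def sumEq (y : ℕ → ℕ) (m : ℕ) : Prop :=
  (Function.support y).Finite ∧ ∑ᶠ i, y i = m

/-- `Y ⊆ ℕ^ℕ` has finite coding dimension: the sums `Σ y`, `y ∈ Y`, are uniformly bounded. -/
def FiniteCodingDim (Y : Set (ℕ → ℕ)) : Prop :=
  ∃ d : ℕ, ∀ y ∈ Y, ∀ F : Finset ℕ, ∑ i ∈ F, y i ≤ d

/-- The set `{ν(y) : y ∈ Y, Σy = k} ⊆ ℕᵏ`: nondecreasing `k`-tuples `t` such that the word
whose letter at `j` is the number of occurrences of `j` in `t` belongs to `Y`. -/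
def nuSet (Y : Set (ℕ → ℕ)) (k : ℕ) : Set (Fin k → ℕ) :=
  { t | Monotone t ∧ (fun j => Set.ncard { i : Fin k | t i = j }) ∈ Y }

/-- `Y ⊆ ℕ^ℕ` is weakly `S`-codable if `{ν(y) : y ∈ Y, Σy = k}` is `S`-recognizable for
every `k`. -/
def WeaklySCodable {A : Type*} (S : ANS A) (Y : Set (ℕ → ℕ)) : Prop :=
  ∀ k : ℕ, S.Recognizable (nuSet Y k)

/-- `Y ⊆ ℕ^ℕ` is `S`-codable if it is weakly `S`-codable and has finite coding dimension. -/
def SCodable {A : Type*} (S : ANS A) (Y : Set (ℕ → ℕ)) : Prop :=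
  WeaklySCodable S Y ∧ FiniteCodingDim Y

/-- `P_{111}(Y)`: strictly increasing triples `(a, b, c)` such that the word with letter `1`
exactly at positions `a`, `b`, `c` and `0` elsewhere belongs to `Y`. -/
def P111 (Y : Set (ℕ → ℕ)) : Set (Fin 3 → ℕ) :=
  { t | t 0 < t 1 ∧ t 1 < t 2 ∧
        (fun j => if j = t 0 ∨ j = t 1 ∨ j = t 2 then 1 else 0) ∈ Y }

/-- `P_v(Y)` for a finite word `v` over `ℕ`: strictly increasing tuples `n` such that the
word with letter `v i` at position `n i` and `0` elsewhere belongs to `Y`. -/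
def PvSet (v : List ℕ) (Y : Set (ℕ → ℕ)) : Set (Fin v.length → ℕ) :=
  { n | StrictMono n ∧
        (fun j => ∑ i : Fin v.length, if n i = j then v.get i else 0) ∈ Y }

/-- `X` is sofic: the set of label sequences of right-infinite paths in a finite
edge-labeled graph. -/
def IsSofic {C : Type*} (X : Set (ℕ → C)) : Prop :=
  ∃ (V : Type) (_ : Fintype V) (E : Set (V × C × V)),
    X = { x | ∃ p : ℕ → V, ∀ n : ℕ, (p n, x n, p (n + 1)) ∈ E }

/-- The factor `x[a..b-1]` of an infinite word. -/
def segmentOf {C : Type*} (x : ℕ → C) (a b : ℕ) : List C :=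
  List.ofFn fun i : Fin (b - a) => x (a + i)

/-- `U · V^ω`: infinite words that decompose as a word of `U` followed by infinitely many
nonempty words of `V`. -/
def omegaIter {C : Type*} (U V : Set (List C)) : Set (ℕ → C) :=
  { x | ∃ k : ℕ → ℕ, StrictMono k ∧ segmentOf x 0 (k 0) ∈ U ∧
        ∀ i : ℕ, segmentOf x (k i) (k (i + 1)) ∈ V }

/-- `X ⊆ C^ℕ` is ω-regular: a finite union of sets `U · V^ω` with `U`, `V` regular. -/
def IsOmegaRegular {C : Type*} (X : Set (ℕ → C)) : Prop :=
  ∃ (n : ℕ) (U V : Fin n → Set (List C)),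
    (∀ i, IsRegularLang (U i) ∧ IsRegularLang (V i)) ∧
    X = ⋃ i, omegaIter (U i) (V i)

/-- The words `p₁ = a`, `p_{k+1} = p_k bᵏ p_k` (with `a = false`, `b = true`). -/
def pWord : ℕ → List Bool
  | 0 => []
  | 1 => [false]
  | (k + 2) => pWord (k + 1) ++ List.replicate (k + 1) true ++ pWord (k + 1)

namespace Stmt10Aux

/-- `Fw g` = prefix of `z` of length `3·2^g - g - 3`; `pWord (g+1) = Fw g ++ [a]`. -/
def Fw : ℕ → List Bool
  | 0 => []
  | (g+1) => Fw g ++ [false] ++ List.replicate (g+1) true ++ Fw g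

lemma pWord_eq_Fw (g : ℕ) : pWord (g+1) = Fw g ++ [false] := by
  induction g with
  | zero => rfl
  | succ g ih =>
    show pWord (g+2) = _
    rw [pWord, ih, Fw]
    simp [List.append_assoc]

lemma Fw_suffix_succ (g : ℕ) : Fw g <:+ Fw (g+1) :=
  ⟨Fw g ++ [false] ++ List.replicate (g+1) true, by rw [Fw]⟩

lemma Fw_len (g : ℕ) : (Fw g).length + g + 3 = 3 * 2 ^ g := by
  induction g with
  | zero => simp [Fw]
  | succ g ih =>
    rw [Fw]
    simp only [List.length_append, List.length_replicate, List.length_cons,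
      List.length_nil, pow_succ]
    omega

lemma Fw_len_pos (g : ℕ) (hg : 1 ≤ g) : 0 < (Fw g).length := by
  have := Fw_len g
  have h2 : g + 4 ≤ 3 * 2 ^ g := by
    clear this
    induction g with
    | zero => omega
    | succ g ih =>
      have h1 : 1 ≤ 2 ^ g := Nat.one_le_two_pow
      rw [pow_succ]; omega
  omega

lemma Fw_getD_zero (g : ℕ) (hg : 1 ≤ g) : (Fw g).getD 0 false = false := by
  induction g with
  | zero => omega
  | succ g ih =>
    rw [Fw]
    rcases Nat.eq_zero_or_pos g with h0 | h0
    · subst h0; rfl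
    · have hl := Fw_len_pos g h0
      rw [List.append_assoc, List.append_assoc, List.getD_append _ _ _ _ hl]
      exact ih h0

/-- The word laid down by a (decreasing) list of "close values". -/
def Dl : List ℕ → List Bool
  | [] => []
  | (g :: G) => Dl G ++ [false] ++ List.replicate (g+1) true ++ Fw g

lemma Dl_cons_len (g : ℕ) (G : List ℕ) :
    (Dl (g :: G)).length = (Dl G).length + g + 2 + (Fw g).length := by
  rw [Dl]; simp; omega

lemma Dl_suffix_Fw : ∀ E G, List.Chain' (· > ·) (E :: G) → Dl G <:+ Fw E := by
  intro E
  induction E with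
  | zero =>
    rintro (_ | ⟨g, G⟩) hc
    · exact List.nil_suffix
    · simp only [List.Chain', List.isChain_cons_cons] at hc; omega
  | succ E ih =>
    rintro (_ | ⟨g, G⟩) hc
    · exact List.nil_suffix
    · simp only [List.Chain', List.isChain_cons_cons] at hc
      obtain ⟨hlt, hc⟩ := hc
      rcases Nat.lt_or_ge g E with hgE | hgE
      · exact ((ih (g :: G)) (List.isChain_cons_cons.mpr ⟨hgE, hc⟩)).trans (Fw_suffix_succ E)
      · have hgE : g = E := by omega
        subst hgE
        obtain ⟨A, hA⟩ := ih G hc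
        refine ⟨A, ?_⟩
        rw [Dl, Fw, ← hA]
        simp [List.append_assoc]

lemma Dl_prefix_append : ∀ H G, Dl G <+: Dl (H ++ G) := by
  intro H G
  induction H with
  | nil => simp
  | cons h H ih =>
    refine ih.trans ?_
    rw [List.cons_append, Dl, List.append_assoc, List.append_assoc]
    exact ⟨_, rfl⟩

/-- getD lemmas for `Dl (c :: G)`. -/
lemma Dl_cons_getD_low (c : ℕ) (G : List ℕ) (i : ℕ) (h : i < (Dl G).length) :
    (Dl (c :: G)).getD i false = (Dl G).getD i false := by
  rw [Dl, List.append_assoc, List.append_assoc, List.getD_append _ _ _ _ h]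

lemma Dl_cons_getD_a (c : ℕ) (G : List ℕ) :
    (Dl (c :: G)).getD (Dl G).length false = false := by
  rw [Dl, List.append_assoc, List.append_assoc,
    List.getD_append_right _ _ _ _ (le_refl _)]
  simp only [Nat.sub_self]
  rfl

lemma Dl_cons_getD_b (c : ℕ) (G : List ℕ) (i : ℕ)
    (h1 : (Dl G).length < i) (h2 : i ≤ (Dl G).length + c + 1) :
    (Dl (c :: G)).getD i false = true := by
  rw [Dl, List.append_assoc, List.append_assoc,
    List.getD_append_right _ _ _ _ (by omega)]
  have h3 : i - (Dl G).length = (i - (Dl G).length - 1) + 1 := by omega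
  rw [h3]
  simp only [List.singleton_append, List.getD_cons_succ]
  rw [List.getD_append _ _ _ _ (by simp; omega)]
  have h4 : i - (Dl G).length - 1 < c + 1 := by omega
  rw [List.getD_eq_getElem _ _ (by simpa using h4)]
  simp

lemma Dl_cons_getD_F (c : ℕ) (G : List ℕ) :
    (Dl (c :: G)).getD ((Dl G).length + c + 2) false = (Fw c).getD 0 false := by
  rw [Dl, List.append_assoc, List.append_assoc,
    List.getD_append_right _ _ _ _ (by omega)]
  have h3 : (Dl G).length + c + 2 - (Dl G).length = c + 2 := by omega
  rw [h3]
  simp only [List.singleton_append, List.getD_cons_succ]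
  rw [List.getD_append_right _ _ _ _ (by simp), List.length_replicate]
  congr 1
  omega


/-! ### Levels and path states -/

def lv : ℕ → ℕ
  | 0 => 3
  | (j+1) => 3 * 2 ^ lv j + 3 * lv j + 10

lemma lv_lt_succ (j : ℕ) : lv j < lv (j+1) := by
  have h1 : 1 ≤ 2 ^ lv j := Nat.one_le_two_pow
  show lv j < 3 * 2 ^ lv j + 3 * lv j + 10
  omega

lemma lv_strictMono : StrictMono lv := strictMono_nat_of_lt_succ lv_lt_succ

lemma lv_ge_three (j : ℕ) : 3 ≤ lv j := by
  cases j with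
  | zero => exact le_refl 3
  | succ j => show 3 ≤ 3 * 2 ^ lv j + 3 * lv j + 10; omega

/-- The state (list of close values, newest first) after processing branches `0..j-1`. -/
def st (s : ℕ → Bool) : ℕ → List ℕ
  | 0 => []
  | (j+1) => if s j = true then st s j
      else (lv j - (Dl (st s j)).length - 2) :: st s j

lemma st_congr (s s' : ℕ → Bool) : ∀ j, (∀ n < j, s n = s' n) → st s j = st s' j := by
  intro j
  induction j with
  | zero => intro _; rfl
  | succ j ih =>
    intro h
    have hj := ih (fun n hn => h n (by omega))
    rw [st, st, hj, h j (by omega)]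

lemma st_ext (s : ℕ → Bool) : ∀ j j', j ≤ j' → ∃ H, st s j' = H ++ st s j := by
  intro j j' hle
  induction j' with
  | zero =>
    have : j = 0 := Nat.le_zero.mp hle
    subst this
    exact ⟨[], rfl⟩
  | succ j' ih =>
    rcases Nat.lt_or_ge j (j'+1) with hlt | hge
    · obtain ⟨H, hH⟩ := ih (by omega)
      rw [st]
      by_cases hs : s j' = true
      · rw [if_pos hs]; exact ⟨H, hH⟩
      · rw [if_neg hs, hH]
        exact ⟨_ :: H, rfl⟩
    · have : j = j' + 1 := by omega
      subst this; exact ⟨[], rfl⟩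

/-- The main invariants of the state. -/
lemma pk (s : ℕ → Bool) : ∀ j, List.Chain' (· > ·) (st s j) ∧
    (Dl (st s j)).length + 3 ≤ lv j ∧
    (∀ h G', st s j = h :: G' → h + (Dl (st s j)).length + 2 < lv j) := by
  intro j
  induction j with
  | zero => exact ⟨List.isChain_nil, by simp [st, Dl, lv], by intro h G' hcon; cases hcon⟩
  | succ j ih =>
    obtain ⟨ihc, ihl, ihh⟩ := ih
    have hlv : lv j < lv (j+1) := lv_lt_succ j
    by_cases hs : s j = true
    · rw [st, if_pos hs]
      refine ⟨ihc, by omega, fun h G' hcon => ?_⟩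
      have := ihh h G' hcon
      omega
    · rw [st, if_neg hs]
      set ρ := (Dl (st s j)).length with hρ
      set c := lv j - ρ - 2 with hc
      have hceq : c + ρ + 2 = lv j := by omega
      have hc1 : 1 ≤ c := by omega
      have hflen : (Fw c).length + c + 3 = 3 * 2 ^ c := Fw_len c
      have hclv : c ≤ lv j := by omega
      have hpow : 2 ^ c ≤ 2 ^ lv j := Nat.pow_le_pow_right (by omega) hclv
      have hlen' : (Dl (c :: st s j)).length = ρ + c + 2 + (Fw c).length :=
        Dl_cons_len c (st s j)
      have hlvs : lv (j+1) = 3 * 2 ^ lv j + 3 * lv j + 10 := rfl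
      refine ⟨?_, by omega, ?_⟩
      · simp only [List.Chain', List.isChain_cons]
        refine ⟨?_, ihc⟩
        intro y hy
        cases hst : st s j with
        | nil => rw [hst] at hy; simp at hy
        | cons h G' =>
          rw [hst] at hy
          simp at hy
          have := ihh h G' hst
          subst hy
          omega
      · intro h G' hcon
        injection hcon with hh htl
        omega

/-- Final list of close values, its anchor, and the tail position. -/
def gfin (d : ℕ) (s : ℕ → Bool) : List ℕ :=
  (lv d + (st s (d+1)).headD 0 + 5) :: st s (d+1)

def Ee (d : ℕ) (s : ℕ → Bool) : ℕ := lv d + (st s (d+1)).headD 0 + 6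

def qq (d : ℕ) (s : ℕ → Bool) : ℕ := (Fw (Ee d s)).length - (Dl (gfin d s)).length

lemma gfin_chain (d : ℕ) (s : ℕ → Bool) :
    List.Chain' (· > ·) (Ee d s :: gfin d s) := by
  simp only [gfin, List.Chain', List.isChain_cons_cons]
  constructor
  · show lv d + (st s (d+1)).headD 0 + 5 < lv d + (st s (d+1)).headD 0 + 6
    omega
  rw [List.isChain_cons]
  refine ⟨?_, (pk s (d+1)).1⟩
  intro y hy
  cases hst : st s (d+1) with
  | nil => rw [hst] at hy; simp at hy
  | cons h G' =>
    rw [hst] at hy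
    simp at hy
    subst hy
    simp
    omega

lemma gfin_suffix (d : ℕ) (s : ℕ → Bool) : Dl (gfin d s) <:+ Fw (Ee d s) :=
  Dl_suffix_Fw _ _ (gfin_chain d s)

lemma qq_add (d : ℕ) (s : ℕ → Bool) :
    qq d s + (Dl (gfin d s)).length = (Fw (Ee d s)).length := by
  have := (gfin_suffix d s).length_le
  rw [qq]
  omega

lemma qq_congr (d : ℕ) (s s' : ℕ → Bool) (h : ∀ n ≤ d, s n = s' n) :
    qq d s = qq d s' := by
  have hst : st s (d+1) = st s' (d+1) := st_congr s s' (d+1) (fun n hn => h n (by omega))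
  rw [qq, qq, gfin, gfin, Ee, Ee, hst]


/-- Downward-induction lemma: decomposition of `gfin` over the state at branch `j`. -/
lemma qlem (d : ℕ) (s : ℕ → Bool) : ∀ n j, j + n = d →
    ∃ H c, gfin d s = H ++ c :: st s j ∧
      lv j ≤ c + (Dl (st s j)).length + 2 ∧
      (s j = true → lv j < c + (Dl (st s j)).length + 2) ∧
      (s j = false → lv j = c + (Dl (st s j)).length + 2) := by
  intro n
  induction n with
  | zero =>
    intro j hj
    have hj' : d = j := by omega
    subst hj'
    by_cases hs : s d = true
    · have hst : st s (d+1) = st s d := by rw [st, if_pos hs]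
      refine ⟨[], lv d + (st s (d+1)).headD 0 + 5, ?_, ?_, ?_, ?_⟩
      · rw [gfin]; rw [hst]; rfl
      · rw [hst]; omega
      · intro _; rw [hst]; omega
      · intro hf; rw [hs] at hf; cases hf
    · have hs' : s d = false := by simpa using hs
      set ρ := (Dl (st s d)).length with hρ
      have hst : st s (d+1) = (lv d - ρ - 2) :: st s d := by
        rw [st, if_neg hs]
      have hl := (pk s d).2.1
      refine ⟨[lv d + (st s (d+1)).headD 0 + 5], lv d - ρ - 2, ?_, by omega, ?_, ?_⟩
      · rw [gfin, hst]; rfl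
      · intro ht; rw [ht] at hs; cases hs rfl
      · intro _; omega
  | succ n ih =>
    intro j hj
    obtain ⟨H, c, hg, h1, h2, h3⟩ := ih (j+1) (by omega)
    by_cases hs : s j = true
    · have hst : st s (j+1) = st s j := by rw [st, if_pos hs]
      rw [hst] at hg h1 h2 h3
      have hlv : lv j < lv (j+1) := lv_lt_succ j
      exact ⟨H, c, hg, by omega, fun _ => by omega,
        fun hf => by rw [hs] at hf; cases hf⟩
    · have hs' : s j = false := by simpa using hs
      set ρ := (Dl (st s j)).length with hρ
      have hst : st s (j+1) = (lv j - ρ - 2) :: st s j := by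
        rw [st, if_neg hs]
      have hl := (pk s j).2.1
      obtain ⟨K, hK⟩ := st_ext s (j+1) (d+1) (by omega)
      refine ⟨(lv d + (st s (d+1)).headD 0 + 5) :: K, lv j - ρ - 2, ?_, by omega, ?_, ?_⟩
      · rw [gfin, hK, hst]; rfl
      · intro ht; rw [ht] at hs; cases hs rfl
      · intro _; omega

/-- `z` starts with `Fw E`. -/
lemma z_prefix_Fw (z : ℕ → Bool)
    (hz : ∀ k : ℕ, ∀ i < (pWord k).length, z i = (pWord k).getD i false) (E i : ℕ) (hi : i < (Fw E).length) : z i = (Fw E).getD i false := by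
  have h1 : i < (pWord (E+1)).length := by
    rw [pWord_eq_Fw]; simp; omega
  rw [hz (E+1) i h1, pWord_eq_Fw, List.getD_append _ _ _ _ hi]

/-- Key letter lemma: the tail of `z` at `qq d s` starts with `Dl (gfin d s)`. -/
lemma KL (z : ℕ → Bool)
    (hz : ∀ k : ℕ, ∀ i < (pWord k).length, z i = (pWord k).getD i false)
    (d : ℕ) (s : ℕ → Bool) (i : ℕ) (hi : i < (Dl (gfin d s)).length) :
    z (qq d s + i) = (Dl (gfin d s)).getD i false := by
  obtain ⟨A, hA⟩ := gfin_suffix d s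
  have hAl : A.length = qq d s := by
    have := congrArg List.length hA
    simp at this
    have := qq_add d s
    omega
  have h1 : qq d s + i < (Fw (Ee d s)).length := by
    have := qq_add d s; omega
  rw [z_prefix_Fw z hz _ _ h1, ← hA, ← hAl,
    List.getD_append_right _ _ _ _ (by omega)]
  congr 1
  omega

/-- Letter lemma (A): the letter at level `lv j` equals the decision bit. -/
lemma lemA (z : ℕ → Bool)
    (hz : ∀ k : ℕ, ∀ i < (pWord k).length, z i = (pWord k).getD i false)
    (d : ℕ) (s : ℕ → Bool) (j : ℕ) (hj : j ≤ d) :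
    z (qq d s + lv j) = s j := by
  obtain ⟨H, c, hg, h1, h2, h3⟩ := qlem d s (d - j) j (by omega)
  set ρ := (Dl (st s j)).length with hρ
  have hl := (pk s j).2.1
  have hpre : Dl (c :: st s j) <+: Dl (gfin d s) := by
    rw [hg]; exact Dl_prefix_append H _
  have hlen : (Dl (c :: st s j)).length = ρ + c + 2 + (Fw c).length :=
    Dl_cons_len c (st s j)
  obtain ⟨B, hB⟩ := hpre
  by_cases hs : s j = true
  · -- continue: letter is b = true
    have h2' := h2 hs
    have hlt : lv j < (Dl (c :: st s j)).length := by omega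
    have hltg : lv j < (Dl (gfin d s)).length := by
      rw [← hB]; simp; omega
    rw [KL z hz d s _ hltg, ← hB, List.getD_append _ _ _ _ hlt, hs]
    exact Dl_cons_getD_b c (st s j) (lv j) (by omega) (by omega)
  · -- close: letter is a = false
    have hs' : s j = false := by simpa using hs
    have h3' := h3 hs'
    have hc1 : 1 ≤ c := by omega
    have hfpos : 0 < (Fw c).length := Fw_len_pos c hc1
    have hlt : lv j < (Dl (c :: st s j)).length := by omega
    have hltg : lv j < (Dl (gfin d s)).length := by
      rw [← hB]; simp; omega
    rw [KL z hz d s _ hltg, ← hB, List.getD_append _ _ _ _ hlt, hs']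
    have : lv j = ρ + c + 2 := by omega
    rw [this, Dl_cons_getD_F c (st s j)]
    exact Fw_getD_zero c hc1

/-- Letter lemma (B): two branches agree strictly below their first splitting level. -/
lemma lemB (z : ℕ → Bool)
    (hz : ∀ k : ℕ, ∀ i < (pWord k).length, z i = (pWord k).getD i false)
    (d : ℕ) (s s' : ℕ → Bool) (j : ℕ) (hj : j ≤ d)
    (hagree : ∀ n < j, s n = s' n) (i : ℕ) (hi : i < lv j) :
    z (qq d s + i) = z (qq d s' + i) := by
  have hstj : st s j = st s' j := st_congr s s' j hagree
  obtain ⟨H, c, hg, h1, _, _⟩ := qlem d s (d - j) j (by omega)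
  obtain ⟨H', c', hg', h1', _, _⟩ := qlem d s' (d - j) j (by omega)
  rw [← hstj] at hg' h1'
  set ρ := (Dl (st s j)).length with hρ
  have hl := (pk s j).2.1
  have key : ∀ (t : ℕ → Bool) (cc : ℕ) (HH : List ℕ), gfin d t = HH ++ cc :: st s j →
      lv j ≤ cc + ρ + 2 →
      z (qq d t + i) = (Dl (cc :: st s j)).getD i false := by
    intro t cc HH hgt hbound
    have hpre : Dl (cc :: st s j) <+: Dl (gfin d t) := by
      rw [hgt]; exact Dl_prefix_append HH _
    obtain ⟨B, hB⟩ := hpre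
    have hlen : (Dl (cc :: st s j)).length = ρ + cc + 2 + (Fw cc).length :=
      Dl_cons_len cc (st s j)
    have hlt : i < (Dl (cc :: st s j)).length := by omega
    have hltg : i < (Dl (gfin d t)).length := by rw [← hB]; simp; omega
    rw [KL z hz d t _ hltg, ← hB, List.getD_append _ _ _ _ hlt]
  rw [key s c H hg (by omega), key s' c' H' hg' (by omega)]
  rcases Nat.lt_or_ge i ρ with hiρ | hiρ
  · rw [Dl_cons_getD_low c _ _ hiρ, Dl_cons_getD_low c' _ _ hiρ]
  rcases Nat.eq_or_lt_of_le hiρ with hieq | hilt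
  · rw [← hieq, Dl_cons_getD_a, Dl_cons_getD_a]
  · rw [Dl_cons_getD_b c _ _ hilt (by omega), Dl_cons_getD_b c' _ _ hilt (by omega)]


lemma getD_ofFn_lt (n : ℕ) (y : ℕ → Bool) (i : ℕ) (h : i < n) :
    (List.ofFn fun k : Fin n => y k).getD i false = y i := by
  rw [List.getD_eq_getElem _ _ (by simpa using h), List.getElem_ofFn]

end Stmt10Aux

open Stmt10Aux

/-- Combinatorial continuity of `φ` on `Y` for product topologies over discrete alphabets:
every finite prefix of `φ y` is determined by a finite prefix of `y`. -/
def ContOn {B C : Type*} (φ : (ℕ → B) → (ℕ → C)) (Y : Set (ℕ → B)) : Prop :=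
  ∀ y ∈ Y, ∀ n : ℕ, ∃ m : ℕ, ∀ y' ∈ Y, (∀ i < m, y' i = y i) → ∀ i < n, φ y' i = φ y i

/-- Let `z` be the fixed point of `a ↦ abab`, `b ↦ b` beginning with `a`
(equivalently, the limit of the `pWord k`, with `a = false`, `b = true`) and `Z = O(z)`.
Then `W(Z)` has infinite coding dimension. -/
theorem stmt10 (z : ℕ → Bool)
    (hz : ∀ k : ℕ, ∀ i < (pWord k).length, z i = (pWord k).getD i false) :
    ¬ FiniteCodingDim (winningShift (orbitClosure z)) := by
  rintro ⟨d, hd⟩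
  classical
  set L : Finset ℕ := (Finset.range (d+1)).image lv with hL
  set α : ℕ → ℕ := fun i => if i ∈ L then 1 else 0 with hα
  set T : Set (List Bool) :=
    {w | ∃ s : ℕ → Bool, ∀ i < w.length, w.getD i false = z (qq d s + i)} with hT
  have cond1 : ([] : List Bool) ∈ T := ⟨fun _ => true, by intro i hi; simp at hi⟩
  have cond2 : ∀ u v : List Bool, u ++ v ∈ T → u ∈ T := by
    rintro u v ⟨s, hs⟩
    refine ⟨s, fun i hi => ?_⟩
    have h1 := hs i (by simp; omega)
    rwa [List.getD_append _ _ _ _ hi] at h1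
  have cond3 : ∀ w ∈ T, Set.ncard { c : Bool | w ++ [c] ∈ T } = α w.length + 1 := by
    rintro w ⟨s₀, hs₀⟩
    set i₀ := w.length with hi₀
    by_cases hmem : i₀ ∈ L
    · obtain ⟨j, hjr, hjlv⟩ := Finset.mem_image.mp hmem
      have hjd : j ≤ d := by
        rw [Finset.mem_range] at hjr; omega
      have huniv : { c : Bool | w ++ [c] ∈ T } = Set.univ := by
        ext c
        simp only [Set.mem_setOf_eq, Set.mem_univ, iff_true]
        refine ⟨fun n => if n = j then c else s₀ n, fun i hi => ?_⟩
        have hi' : i < i₀ + 1 := by simpa using hi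
        rcases Nat.lt_or_ge i i₀ with hii | hii
        · rw [List.getD_append _ _ _ _ (by omega : i < w.length), hs₀ i hii]
          by_cases hc : c = s₀ j
          · have hcongr : qq d s₀ = qq d (fun n => if n = j then c else s₀ n) := by
              refine qq_congr d _ _ (fun n _ => ?_)
              by_cases hn : n = j
              · subst hn; rw [if_pos rfl, hc]
              · rw [if_neg hn]
            rw [hcongr]
          · exact lemB z hz d s₀ _ j hjd
              (fun n hn => by rw [if_neg (by omega)]) i (by omega)
        · have hieq : i = i₀ := by omega
          subst hieq
          rw [List.getD_append_right _ _ _ _ (le_refl _), Nat.sub_self]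
          show c = z (qq d (fun n => if n = j then c else s₀ n) + i₀)
          rw [← hjlv, lemA z hz d _ j hjd, if_pos rfl]
      rw [huniv]
      have hα1 : α i₀ = 1 := if_pos hmem
      rw [hα1]
      simp [Set.ncard_univ]
    · have hsingle : { c : Bool | w ++ [c] ∈ T } = {z (qq d s₀ + i₀)} := by
        ext c
        simp only [Set.mem_setOf_eq, Set.mem_singleton_iff]
        constructor
        · rintro ⟨s', hs'⟩
          have hc : c = z (qq d s' + i₀) := by
            have h1 := hs' i₀ (by simp; omega)
            rwa [List.getD_append_right _ _ _ _ (le_refl _), Nat.sub_self] at h1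
          have hcompat : ∀ i < i₀, z (qq d s' + i) = z (qq d s₀ + i) := by
            intro i hi
            have h1 := hs' i (by simp; omega)
            rw [List.getD_append _ _ _ _ hi] at h1
            rw [← h1, hs₀ i hi]
          by_cases hall : ∀ n ≤ d, s' n = s₀ n
          · rw [hc, qq_congr d s' s₀ hall]
          · push_neg at hall
            obtain ⟨n₀, hn₀d, hne⟩ := hall
            have hex : ∃ n, s' n ≠ s₀ n := ⟨n₀, hne⟩
            have hjne : s' (Nat.find hex) ≠ s₀ (Nat.find hex) := Nat.find_spec hex
            have hjmin : ∀ n < Nat.find hex, s' n = s₀ n :=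
              fun n hn => not_not.mp (Nat.find_min hex hn)
            have hjd : Nat.find hex ≤ d := le_trans (Nat.find_min' hex hne) hn₀d
            have hdiff : z (qq d s' + lv (Nat.find hex)) ≠ z (qq d s₀ + lv (Nat.find hex)) := by
              rw [lemA z hz d s' _ hjd, lemA z hz d s₀ _ hjd]
              exact hjne
            have hlvne : lv (Nat.find hex) ≠ i₀ := by
              intro he
              exact hmem (Finset.mem_image.mpr
                ⟨Nat.find hex, Finset.mem_range.mpr (by omega), he⟩)
            have hlvnlt : ¬ lv (Nat.find hex) < i₀ := fun hlt => hdiff (hcompat _ hlt)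
            have hgt : i₀ < lv (Nat.find hex) := by omega
            rw [hc]
            exact lemB z hz d s' s₀ _ hjd hjmin i₀ hgt
        · rintro rfl
          refine ⟨s₀, fun i hi => ?_⟩
          have hi' : i < i₀ + 1 := by simpa using hi
          rcases Nat.lt_or_ge i i₀ with hii | hii
          · rw [List.getD_append _ _ _ _ (by omega : i < w.length)]
            exact hs₀ i hii
          · have hieq : i = i₀ := by omega
            subst hieq
            rw [List.getD_append_right _ _ _ _ (le_refl _), Nat.sub_self]
            rfl
      rw [hsingle, Set.ncard_singleton]
      have hα0 : α i₀ = 0 := if_neg hmem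
      rw [hα0]
  have cond4 : ∀ y : ℕ → Bool, (∀ n : ℕ, (List.ofFn fun i : Fin n => y i) ∈ T) →
      (∀ n : ℕ, ∃ m : ℕ, ∀ i < n, y i = z (m + i)) := by
    intro y hy n
    obtain ⟨s, hs⟩ := hy n
    refine ⟨qq d s, fun i hi => ?_⟩
    have h1 := hs i (by simpa using hi)
    rwa [getD_ofFn_lt n y i hi] at h1
  have hmem : α ∈ winningShift (orbitClosure z) :=
    ⟨T, cond1, cond2, cond3, cond4⟩
  have hsum := hd α hmem L
  have hsum1 : ∑ i ∈ L, α i = L.card := by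
    rw [Finset.sum_congr rfl (fun i hi => if_pos hi)]
    simp
  have hcard : L.card = d + 1 := by
    rw [hL, Finset.card_image_of_injective _ lv_strictMono.injective, Finset.card_range]
  omega
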